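/- If F is a finite subset of ℤ^d containing 0, with |F| many elements, and p is a prime, then the p-fold convolution (𝟙_F)^{*p} is congruent to 𝟙_{pF} modulo p, i.e., for every x ∈ ℤ^d, p divides (𝟙_F)^{*p}(x) - 𝟙_{pF}(x). -/

import Mathlib

open AddMonoidAlgebra Finsupp

section aux

variable {G : Type*} [AddCommMonoid G] {p : ℕ}

/-- Coefficient reduction mod `p` as a ring hom on the additive monoid algebra. -/
noncomputable def redModP (G : Type*) [AddCommMonoid G] (p : ℕ) :
    AddMonoidAlgebra ℤ G →+* AddMonoidAlgebra (ZMod p) G :=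
  AddMonoidAlgebra.liftNCRingHom
    ((AddMonoidAlgebra.singleZeroRingHom : ZMod p →+* AddMonoidAlgebra (ZMod p) G).comp
      (Int.castRingHom (ZMod p)))
    (AddMonoidAlgebra.of (ZMod p) G)
    (fun _ _ => Commute.all _ _)

lemma redModP_single (a : G) (b : ℤ) :
    redModP G p (AddMonoidAlgebra.single a b) = AddMonoidAlgebra.single a (b : ZMod p) := by
  show AddMonoidAlgebra.liftNC _ _ _ = _
  rw [AddMonoidAlgebra.liftNC_single]
  show AddMonoidAlgebra.single 0 ((b : ZMod p)) * AddMonoidAlgebra.single a 1 = _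
  rw [AddMonoidAlgebra.single_mul_single, zero_add, mul_one]

lemma redModP_apply (A : AddMonoidAlgebra ℤ G) (x : G) :
    (redModP G p A).coeff x = ((A.coeff x : ℤ) : ZMod p) := by
  induction A using AddMonoidAlgebra.induction with
  | zero => simp
  | single_add a b f _ _ ih =>
      classical
      rw [map_add, redModP_single, AddMonoidAlgebra.coeff_add, Finsupp.add_apply, AddMonoidAlgebra.coeff_add, Finsupp.add_apply, ih,
        AddMonoidAlgebra.coeff_single, AddMonoidAlgebra.coeff_single, Finsupp.single_apply, Finsupp.single_apply]
      split <;> push_cast <;> ring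

end aux

/-- For a finite `F ⊂ ℤ^d` with `0 ∈ F` and a prime `p`, the `p`-fold convolution power
`(𝟙_F)^{*p}` is congruent to `𝟙_{pF}` modulo `p`, pointwise.  Here the indicator
`𝟙_F` is viewed as the element `∑_{f ∈ F} δ_f` of the convolution ring
`AddMonoidAlgebra ℤ (ℤ^d)`, and `pF = {p·f : f ∈ F}`. -/
theorem stmt_2 (d : ℕ) (F : Finset (Fin d → ℤ)) (h0 : 0 ∈ F)
    (p : ℕ) (hp : p.Prime) :
    ∀ x : Fin d → ℤ,
      (p : ℤ) ∣ (((∑ f ∈ F, AddMonoidAlgebra.single f (1 : ℤ)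
              : AddMonoidAlgebra ℤ (Fin d → ℤ)) ^ p
          - (∑ f ∈ F, AddMonoidAlgebra.single ((p : ℤ) • f) (1 : ℤ)
              : AddMonoidAlgebra ℤ (Fin d → ℤ))).coeff x) := by
  haveI : Fact p.Prime := ⟨hp⟩
  haveI : CharP (AddMonoidAlgebra (ZMod p) (Fin d → ℤ)) p :=
    charP_of_injective_algebraMap
      (R := ZMod p) (A := AddMonoidAlgebra (ZMod p) (Fin d → ℤ))
      (fun a b h => by
        have h2 := congrFun (AddMonoidAlgebra.coe_algebraMap (R := ZMod p)
          (A := ZMod p) (M := (Fin d → ℤ)))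
        rw [h2 a, h2 b] at h
        have h3 : (AddMonoidAlgebra.single (0 : Fin d → ℤ) a
              : AddMonoidAlgebra (ZMod p) (Fin d → ℤ))
            = AddMonoidAlgebra.single (0 : Fin d → ℤ) b := by simpa using h
        exact AddMonoidAlgebra.single_right_injective h3) p
  intro x
  have key : redModP (Fin d → ℤ) p
      ((∑ f ∈ F, AddMonoidAlgebra.single f (1 : ℤ) : AddMonoidAlgebra ℤ (Fin d → ℤ)) ^ p
        - (∑ f ∈ F, AddMonoidAlgebra.single ((p : ℤ) • f) (1 : ℤ) : AddMonoidAlgebra ℤ (Fin d → ℤ))) = 0 := by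
    rw [map_sub, map_pow, map_sum, map_sum]
    simp only [redModP_single, Int.cast_one]
    rw [sum_pow_char, sub_eq_zero]
    refine Finset.sum_congr rfl fun f _ => ?_
    rw [AddMonoidAlgebra.single_pow, one_pow, natCast_zsmul]
  have h2 : ((((∑ f ∈ F, AddMonoidAlgebra.single f (1 : ℤ)
          : AddMonoidAlgebra ℤ (Fin d → ℤ)) ^ p
        - (∑ f ∈ F, AddMonoidAlgebra.single ((p : ℤ) • f) (1 : ℤ) : AddMonoidAlgebra ℤ (Fin d → ℤ))).coeff x : ℤ) : ZMod p)
      = (0 : AddMonoidAlgebra (ZMod p) (Fin d → ℤ)).coeff x := by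
    rw [← redModP_apply, key]
  simp only [AddMonoidAlgebra.coeff_zero, Finsupp.coe_zero, Pi.zero_apply] at h2
  exact (ZMod.intCast_zmod_eq_zero_iff_dvd _ _).mp h2
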